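/- The antipode S of the Connes–Moscovici algebra satisfies the second Hopf algebroid antipode axiom μ_H(id ⊗ S)Δ_r = s_l ε_l; explicitly, for all a, b ∈ A and q ∈ Q: Σ (a ⊗ q₍₁₎ ⊗ 1)·S(1 ⊗ q₍₂₎ ⊗ b) = (a ε(q) b) ⊗ 1 ⊗ 1, where the product is taken in H. -/

import Mathlib

open TensorProduct

noncomputable section

/-- `(id ⊗ Δ) ∘ Δ : Q → Q ⊗ (Q ⊗ Q)`, producing the Sweedler legs
`q₍₁₎ ⊗ q₍₂₎ ⊗ q₍₃₎` of the iterated coproduct. -/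
def comul2 (Q : Type*) [Ring Q] [HopfAlgebra ℂ Q] :
    Q →ₗ[ℂ] Q ⊗[ℂ] (Q ⊗[ℂ] Q) :=
  (LinearMap.lTensor Q (Coalgebra.comul (R := ℂ))).comp (Coalgebra.comul (R := ℂ))

/-- The right-hand side `Σ a (q₍₁₎·a') ⊗ q₍₂₎ q' ⊗ (q₍₃₎·b') b` of the
Connes–Moscovici product formula on `H = A ⊗ Q ⊗ A`. -/
def cmMulRHS {Q A : Type*} [Ring Q] [HopfAlgebra ℂ Q] [Ring A] [Algebra ℂ A]
    (act : Q →ₗ[ℂ] A →ₗ[ℂ] A) (a : A) (q : Q) (b : A) (a' : A) (q' : Q) (b' : A) :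
    A ⊗[ℂ] (Q ⊗[ℂ] A) :=
  TensorProduct.map ((LinearMap.mulLeft ℂ a).comp (act.flip a'))
    (TensorProduct.map (LinearMap.mulRight ℂ q')
      ((LinearMap.mulRight ℂ b).comp (act.flip b')))
    (comul2 Q q)

/-- The order-reversing map `A ⊗ (Q ⊗ A) → A ⊗ (Q ⊗ A)`, `x ⊗ y ⊗ z ↦ z ⊗ y ⊗ x`. -/
def cmRev {Q A : Type*} [Ring Q] [HopfAlgebra ℂ Q] [Ring A] [Algebra ℂ A] :
    (A ⊗[ℂ] (Q ⊗[ℂ] A)) →ₗ[ℂ] (A ⊗[ℂ] (Q ⊗[ℂ] A)) :=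
  (TensorProduct.congr (LinearEquiv.refl ℂ A) (TensorProduct.comm ℂ Q A) ≪≫ₗ
    (TensorProduct.assoc ℂ A A Q).symm ≪≫ₗ
    TensorProduct.congr (TensorProduct.comm ℂ A A) (LinearEquiv.refl ℂ Q) ≪≫ₗ
    TensorProduct.assoc ℂ A A Q ≪≫ₗ
    TensorProduct.congr (LinearEquiv.refl ℂ A) (TensorProduct.comm ℂ A Q)).toLinearMap

/-- The value `Σ T(q₍₃₎)·b ⊗ T(q₍₂₎) ⊗ T(q₍₁₎)·a` of the antipode of the
Connes–Moscovici algebra on an elementary tensor `a ⊗ q ⊗ b`. -/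
def cmAntipodeRHS {Q A : Type*} [Ring Q] [HopfAlgebra ℂ Q] [Ring A] [Algebra ℂ A]
    (act : Q →ₗ[ℂ] A →ₗ[ℂ] A) (a : A) (q : Q) (b : A) :
    A ⊗[ℂ] (Q ⊗[ℂ] A) :=
  cmRev
    (TensorProduct.map ((act.flip a).comp (HopfAlgebra.antipode (R := ℂ)))
      (TensorProduct.map (HopfAlgebra.antipode (R := ℂ))
        ((act.flip b).comp (HopfAlgebra.antipode (R := ℂ))))
      (comul2 Q q))

/-- The linear map `Q →ₗ H`, `x ↦ a ⊗ x ⊗ 1`. -/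
def cmLegL {Q A : Type*} [Ring Q] [HopfAlgebra ℂ Q] [Ring A] [Algebra ℂ A] (a : A) :
    Q →ₗ[ℂ] A ⊗[ℂ] (Q ⊗[ℂ] A) :=
  (TensorProduct.mk ℂ A (Q ⊗[ℂ] A) a).comp ((TensorProduct.mk ℂ Q A).flip 1)

/-- The linear map `Q →ₗ H`, `x ↦ 1 ⊗ x ⊗ b`. -/
def cmLegR {Q A : Type*} [Ring Q] [HopfAlgebra ℂ Q] [Ring A] [Algebra ℂ A] (b : A) :
    Q →ₗ[ℂ] A ⊗[ℂ] (Q ⊗[ℂ] A) :=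
  (TensorProduct.mk ℂ A (Q ⊗[ℂ] A) 1).comp ((TensorProduct.mk ℂ Q A).flip b)


lemma counit_smul_left {Q : Type*} [Ring Q] [HopfAlgebra ℂ Q] {c : Q} {ι : Type*}
    (s : Coalgebra.Repr ℂ c ι) :
    ∑ i ∈ s.index, (Coalgebra.counit (R := ℂ) (s.left i)) • s.right i = c := by
  have h := congrArg (TensorProduct.lid ℂ Q) (Coalgebra.sum_counit_tmul_eq s)
  rw [map_sum] at h
  simp only [lid_tmul] at h
  simpa using h

lemma counit_smul_right {Q : Type*} [Ring Q] [HopfAlgebra ℂ Q] {c : Q} {ι : Type*}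
    (s : Coalgebra.Repr ℂ c ι) :
    ∑ i ∈ s.index, (Coalgebra.counit (R := ℂ) (s.right i)) • s.left i = c := by
  have h := congrArg (TensorProduct.rid ℂ Q) (Coalgebra.sum_tmul_counit_eq s)
  rw [map_sum] at h
  simp only [rid_tmul] at h
  simpa using h

lemma counit_antipode' {Q : Type*} [Ring Q] [HopfAlgebra ℂ Q] (c : Q) :
    Coalgebra.counit (R := ℂ) (HopfAlgebra.antipode (R := ℂ) c)
      = Coalgebra.counit (R := ℂ) c := by
  classical
  set s := Coalgebra.Repr.arbitrary ℂ c with hs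
  conv_lhs => rw [← counit_smul_right s]
  rw [map_sum, map_sum]
  have : ∀ i ∈ s.index,
      Coalgebra.counit (R := ℂ)
        (HopfAlgebra.antipode (R := ℂ) ((Coalgebra.counit (R := ℂ) (s.right i)) • s.left i))
      = Coalgebra.counit (R := ℂ)
          (HopfAlgebra.antipode (R := ℂ) (s.left i) * s.right i) := by
    intro i _
    rw [map_smul, map_smul, Bialgebra.counit_mul, smul_eq_mul, mul_comm]
  rw [Finset.sum_congr rfl this, ← map_sum, HopfAlgebra.sum_antipode_mul_eq_algebraMap_counit s]
  simp [Algebra.algebraMap_eq_smul_one]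

section CMAux

variable {Q A : Type*} [Ring Q] [HopfAlgebra ℂ Q] [Ring A] [Algebra ℂ A]

/-- `y ↦ (T y)·b`. -/
def outerT (act : Q →ₗ[ℂ] A →ₗ[ℂ] A) (b : A) : Q →ₗ[ℂ] A :=
  (act.flip b) ∘ₗ HopfAlgebra.antipode (R := ℂ)

/-- `x ⊗ y ↦ ((T y)·b) ⊗ (T x ⊗ 1)`. -/
def Gmap (act : Q →ₗ[ℂ] A →ₗ[ℂ] A) (b : A) :
    Q ⊗[ℂ] Q →ₗ[ℂ] A ⊗[ℂ] (Q ⊗[ℂ] A) :=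
  (TensorProduct.map (outerT act b)
      (((TensorProduct.mk ℂ Q A).flip 1) ∘ₗ HopfAlgebra.antipode (R := ℂ))) ∘ₗ
    (TensorProduct.comm ℂ Q Q).toLinearMap

@[simp] lemma Gmap_tmul (act : Q →ₗ[ℂ] A →ₗ[ℂ] A) (b : A) (x y : Q) :
    Gmap act b (x ⊗ₜ[ℂ] y) =
      (act (HopfAlgebra.antipode (R := ℂ) y) b) ⊗ₜ[ℂ]
        ((HopfAlgebra.antipode (R := ℂ) x) ⊗ₜ[ℂ] (1 : A)) := by
  simp [Gmap, outerT]

/-- `x₁ ⊗ x₂ ↦ (a (x₁·a')) ⊗ ((x₂ q') ⊗ 1)`. -/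
def Hmap (act : Q →ₗ[ℂ] A →ₗ[ℂ] A) (a a' : A) (q' : Q) :
    Q ⊗[ℂ] Q →ₗ[ℂ] A ⊗[ℂ] (Q ⊗[ℂ] A) :=
  TensorProduct.map ((LinearMap.mulLeft ℂ a) ∘ₗ act.flip a')
    (((TensorProduct.mk ℂ Q A).flip 1) ∘ₗ LinearMap.mulRight ℂ q')

@[simp] lemma Hmap_tmul (act : Q →ₗ[ℂ] A →ₗ[ℂ] A) (a a' : A) (q' : Q) (x₁ x₂ : Q) :
    Hmap act a a' q' (x₁ ⊗ₜ[ℂ] x₂) =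
      (a * act x₁ a') ⊗ₜ[ℂ] ((x₂ * q') ⊗ₜ[ℂ] (1 : A)) := by
  simp [Hmap]

/-- `(x₁ ⊗ x₂) ⊗ (y₁ ⊗ y₂) ↦ (a (x₁·((T y₂)·b))) ⊗ ((x₂ T(y₁)) ⊗ 1)`. -/
def Lam (act : Q →ₗ[ℂ] A →ₗ[ℂ] A) (a b : A) :
    (Q ⊗[ℂ] Q) ⊗[ℂ] (Q ⊗[ℂ] Q) →ₗ[ℂ] A ⊗[ℂ] (Q ⊗[ℂ] A) :=
  (TensorProduct.map
      ((LinearMap.mulLeft ℂ a) ∘ₗ TensorProduct.lift (act.compl₂ (outerT act b)))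
      (((TensorProduct.mk ℂ Q A).flip 1) ∘ₗ (LinearMap.mul' ℂ Q) ∘ₗ
        (LinearMap.lTensor Q (HopfAlgebra.antipode (R := ℂ))))) ∘ₗ
    (TensorProduct.tensorTensorTensorComm ℂ Q Q Q Q).toLinearMap ∘ₗ
    (LinearMap.lTensor (Q ⊗[ℂ] Q) (TensorProduct.comm ℂ Q Q).toLinearMap)

@[simp] lemma Lam_tmul (act : Q →ₗ[ℂ] A →ₗ[ℂ] A) (a b : A) (x₁ x₂ y₁ y₂ : Q) :
    Lam act a b ((x₁ ⊗ₜ[ℂ] x₂) ⊗ₜ[ℂ] (y₁ ⊗ₜ[ℂ] y₂)) =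
      (a * act x₁ (act (HopfAlgebra.antipode (R := ℂ) y₂) b)) ⊗ₜ[ℂ]
        ((x₂ * HopfAlgebra.antipode (R := ℂ) y₁) ⊗ₜ[ℂ] (1 : A)) := by
  simp [Lam, outerT]

lemma Lam_eq_Hmap (act : Q →ₗ[ℂ] A →ₗ[ℂ] A) (a b : A) (x : Q ⊗[ℂ] Q) (y z : Q) :
    Lam act a b (x ⊗ₜ[ℂ] (y ⊗ₜ[ℂ] z)) =
      Hmap act a (act (HopfAlgebra.antipode (R := ℂ) z) b)
        (HopfAlgebra.antipode (R := ℂ) y) x := by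
  induction x using TensorProduct.induction_on with
  | zero => simp
  | tmul x₁ x₂ => simp
  | add u v hu hv =>
      rw [TensorProduct.add_tmul, map_add, hu, hv, map_add]

@[simp] lemma cmRev_tmul (x : A) (y : Q) (z : A) :
    cmRev (Q := Q) (A := A) (x ⊗ₜ[ℂ] (y ⊗ₜ[ℂ] z)) = z ⊗ₜ[ℂ] (y ⊗ₜ[ℂ] x) := by
  simp [cmRev]

end CMAux

section CMKey

variable {Q A : Type*} [Ring Q] [HopfAlgebra ℂ Q] [Ring A] [Algebra ℂ A]

lemma lemB (act : Q →ₗ[ℂ] A →ₗ[ℂ] A) (b : A)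
    (hact_alg_one : ∀ q : Q, act q 1 = Coalgebra.counit (R := ℂ) q • (1 : A))
    (S : (A ⊗[ℂ] (Q ⊗[ℂ] A)) →ₗ[ℂ] (A ⊗[ℂ] (Q ⊗[ℂ] A)))
    (hS : ∀ (a : A) (q : Q) (b : A),
      S (a ⊗ₜ[ℂ] (q ⊗ₜ[ℂ] b)) = cmAntipodeRHS act a q b) (c : Q) :
    S ((1 : A) ⊗ₜ[ℂ] (c ⊗ₜ[ℂ] b)) = Gmap act b (Coalgebra.comul (R := ℂ) c) := by
  classical
  rw [hS 1 c b]
  unfold cmAntipodeRHS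
  set s := Coalgebra.Repr.arbitrary ℂ c with hsdef
  have hc2 : comul2 Q c
      = ∑ j ∈ s.index, s.left j ⊗ₜ[ℂ] (Coalgebra.comul (R := ℂ) (s.right j)) := by
    rw [comul2, LinearMap.comp_apply, ← s.eq, map_sum]
    simp
  rw [hc2, map_sum, map_sum]
  have key : ∀ j ∈ s.index,
      cmRev ((TensorProduct.map ((act.flip 1).comp (HopfAlgebra.antipode (R := ℂ)))
        (TensorProduct.map (HopfAlgebra.antipode (R := ℂ))
          ((act.flip b).comp (HopfAlgebra.antipode (R := ℂ)))))
        (s.left j ⊗ₜ[ℂ] (Coalgebra.comul (R := ℂ) (s.right j)))) =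
      (Coalgebra.counit (R := ℂ) (s.left j)) •
        Gmap act b (Coalgebra.comul (R := ℂ) (s.right j)) := by
    intro j _
    set t := Coalgebra.Repr.arbitrary ℂ (s.right j) with htdef
    rw [← t.eq, tmul_sum, map_sum, map_sum]
    conv_rhs => rw [map_sum]
    rw [Finset.smul_sum]
    refine Finset.sum_congr rfl fun k _ => ?_
    simp only [TensorProduct.map_tmul, LinearMap.comp_apply, LinearMap.flip_apply,
      cmRev_tmul, Gmap_tmul, hact_alg_one, counit_antipode']
    rw [tmul_smul, tmul_smul]
  rw [Finset.sum_congr rfl key]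
  have := congrArg ((Gmap act b) ∘ₗ (Coalgebra.comul (R := ℂ))) (counit_smul_left s)
  rw [map_sum] at this
  simp only [LinearMap.comp_apply, map_smul] at this
  exact this

end CMKey
section CMKey2

variable {Q A : Type*} [Ring Q] [HopfAlgebra ℂ Q] [Ring A] [Algebra ℂ A]

lemma lemC (act : Q →ₗ[ℂ] A →ₗ[ℂ] A) (a : A)
    (hact_alg_one : ∀ q : Q, act q 1 = Coalgebra.counit (R := ℂ) q • (1 : A))
    (m : (A ⊗[ℂ] (Q ⊗[ℂ] A)) →ₗ[ℂ] (A ⊗[ℂ] (Q ⊗[ℂ] A)) →ₗ[ℂ] (A ⊗[ℂ] (Q ⊗[ℂ] A)))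
    (hm : ∀ (a : A) (q : Q) (b a' : A) (q' : Q) (b' : A),
      m (a ⊗ₜ[ℂ] (q ⊗ₜ[ℂ] b)) (a' ⊗ₜ[ℂ] (q' ⊗ₜ[ℂ] b')) = cmMulRHS act a q b a' q' b')
    (x : Q) (a' : A) (q' : Q) :
    m (a ⊗ₜ[ℂ] (x ⊗ₜ[ℂ] (1 : A))) (a' ⊗ₜ[ℂ] (q' ⊗ₜ[ℂ] (1 : A)))
      = Hmap act a a' q' (Coalgebra.comul (R := ℂ) x) := by
  classical
  rw [hm a x 1 a' q' 1]
  unfold cmMulRHS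
  set s := Coalgebra.Repr.arbitrary ℂ x with hsdef
  have hc2 : comul2 Q x
      = ∑ j ∈ s.index, s.left j ⊗ₜ[ℂ] (Coalgebra.comul (R := ℂ) (s.right j)) := by
    rw [comul2, LinearMap.comp_apply, ← s.eq, map_sum]
    simp
  rw [hc2, map_sum]
  have key : ∀ j ∈ s.index,
      (TensorProduct.map ((LinearMap.mulLeft ℂ a).comp (act.flip a'))
        (TensorProduct.map (LinearMap.mulRight ℂ q')
          ((LinearMap.mulRight ℂ (1 : A)).comp (act.flip (1 : A)))))
        (s.left j ⊗ₜ[ℂ] (Coalgebra.comul (R := ℂ) (s.right j))) =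
      (a * act (s.left j) a') ⊗ₜ[ℂ] ((s.right j * q') ⊗ₜ[ℂ] (1 : A)) := by
    intro j _
    set t := Coalgebra.Repr.arbitrary ℂ (s.right j) with htdef
    rw [← t.eq, tmul_sum, map_sum]
    have step : ∀ k ∈ t.index,
        (TensorProduct.map ((LinearMap.mulLeft ℂ a).comp (act.flip a'))
          (TensorProduct.map (LinearMap.mulRight ℂ q')
            ((LinearMap.mulRight ℂ (1 : A)).comp (act.flip (1 : A)))))
          (s.left j ⊗ₜ[ℂ] (t.left k ⊗ₜ[ℂ] t.right k)) =
        (Coalgebra.counit (R := ℂ) (t.right k)) •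
          ((a * act (s.left j) a') ⊗ₜ[ℂ] ((t.left k * q') ⊗ₜ[ℂ] (1 : A))) := by
      intro k _
      simp only [TensorProduct.map_tmul, LinearMap.comp_apply, LinearMap.flip_apply,
        LinearMap.mulLeft_apply, LinearMap.mulRight_apply, hact_alg_one, smul_mul_assoc,
        one_mul, tmul_smul]
    rw [Finset.sum_congr rfl step]
    -- now ∑ k ε(t.right k) • (C ⊗ₜ ((t.left k * q') ⊗ₜ 1)) = C ⊗ₜ ((s.right j * q') ⊗ₜ 1)
    have := congrArg
      ((TensorProduct.mk ℂ A (Q ⊗[ℂ] A) (a * act (s.left j) a')) ∘ₗ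
        ((TensorProduct.mk ℂ Q A).flip 1) ∘ₗ (LinearMap.mulRight ℂ q'))
      (counit_smul_right t)
    rw [map_sum] at this
    simp only [LinearMap.comp_apply, map_smul, TensorProduct.mk_apply,
      LinearMap.flip_apply, LinearMap.mulRight_apply] at this
    exact this
  rw [Finset.sum_congr rfl key]
  conv_rhs => rw [← s.eq, map_sum]
  simp

end CMKey2
section CMKey3

variable {Q : Type*} [Ring Q] [HopfAlgebra ℂ Q]

lemma mapE :
    (TensorProduct.map (Coalgebra.comul (R := ℂ)) (Coalgebra.comul (R := ℂ))) ∘ₗ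
        (Coalgebra.comul (R := ℂ) (A := Q)) =
      (TensorProduct.assoc ℂ (Q ⊗[ℂ] Q) Q Q).toLinearMap ∘ₗ
        LinearMap.rTensor Q
          ((TensorProduct.assoc ℂ Q Q Q).symm.toLinearMap ∘ₗ
            LinearMap.lTensor Q (Coalgebra.comul (R := ℂ)) ∘ₗ Coalgebra.comul (R := ℂ)) ∘ₗ
        Coalgebra.comul (R := ℂ) := by
  have nat : LinearMap.rTensor (Q ⊗[ℂ] Q) (Coalgebra.comul (R := ℂ) (A := Q)) ∘ₗ
      (TensorProduct.assoc ℂ Q Q Q).toLinearMap =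
      (TensorProduct.assoc ℂ (Q ⊗[ℂ] Q) Q Q).toLinearMap ∘ₗ
        LinearMap.rTensor Q (LinearMap.rTensor Q (Coalgebra.comul (R := ℂ) (A := Q))) := by
    apply TensorProduct.ext_threefold
    intro x y z
    simp [LinearMap.rTensor_tmul]
  calc (TensorProduct.map (Coalgebra.comul (R := ℂ)) (Coalgebra.comul (R := ℂ))) ∘ₗ
        (Coalgebra.comul (R := ℂ) (A := Q))
      = LinearMap.rTensor (Q ⊗[ℂ] Q) (Coalgebra.comul (R := ℂ)) ∘ₗ
          (LinearMap.lTensor Q (Coalgebra.comul (R := ℂ)) ∘ₗ Coalgebra.comul (R := ℂ)) := by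
        rw [← LinearMap.comp_assoc, LinearMap.rTensor_comp_lTensor]
    _ = LinearMap.rTensor (Q ⊗[ℂ] Q) (Coalgebra.comul (R := ℂ)) ∘ₗ
          ((TensorProduct.assoc ℂ Q Q Q).toLinearMap ∘ₗ
            LinearMap.rTensor Q (Coalgebra.comul (R := ℂ)) ∘ₗ Coalgebra.comul (R := ℂ)) := by
        rw [Coalgebra.coassoc]
    _ = (TensorProduct.assoc ℂ (Q ⊗[ℂ] Q) Q Q).toLinearMap ∘ₗ
          LinearMap.rTensor Q (LinearMap.rTensor Q (Coalgebra.comul (R := ℂ))) ∘ₗ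
          LinearMap.rTensor Q (Coalgebra.comul (R := ℂ)) ∘ₗ Coalgebra.comul (R := ℂ) := by
        rw [← LinearMap.comp_assoc, nat]
        simp [LinearMap.comp_assoc]
    _ = (TensorProduct.assoc ℂ (Q ⊗[ℂ] Q) Q Q).toLinearMap ∘ₗ
          LinearMap.rTensor Q
            (LinearMap.rTensor Q (Coalgebra.comul (R := ℂ)) ∘ₗ Coalgebra.comul (R := ℂ)) ∘ₗ
          Coalgebra.comul (R := ℂ) := by
        rw [LinearMap.rTensor_comp]
        simp [LinearMap.comp_assoc]
    _ = _ := by rw [Coalgebra.coassoc_symm]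

end CMKey3
section CMKey4

variable {Q : Type*} [Ring Q] [HopfAlgebra ℂ Q]

lemma keyD {ι κ ν : Type*} (q : Q) (r : Coalgebra.Repr ℂ q ι)
    (v : ∀ i : r.ι, Coalgebra.Repr ℂ (r.left i) κ)
    (w : ∀ (i : r.ι) (k : (v i).ι), Coalgebra.Repr ℂ ((v i).right k) ν) :
    TensorProduct.map (Coalgebra.comul (R := ℂ)) (Coalgebra.comul (R := ℂ))
        (Coalgebra.comul (R := ℂ) q) =
      ∑ i ∈ r.index, ∑ k ∈ (v i).index, ∑ l ∈ (w i k).index,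
        ((v i).left k ⊗ₜ[ℂ] (w i k).left l) ⊗ₜ[ℂ]
          ((w i k).right l ⊗ₜ[ℂ] r.right i) := by
  classical
  have h := congrArg (fun (f : Q →ₗ[ℂ] (Q ⊗[ℂ] Q) ⊗[ℂ] (Q ⊗[ℂ] Q)) => f q) mapE
  simp only [LinearMap.comp_apply] at h
  rw [h, ← r.eq, map_sum, map_sum]
  refine Finset.sum_congr rfl fun i _ => ?_
  rw [LinearMap.rTensor_tmul]
  have hinner : ((TensorProduct.assoc ℂ Q Q Q).symm.toLinearMap ∘ₗ
      LinearMap.lTensor Q (Coalgebra.comul (R := ℂ)) ∘ₗ Coalgebra.comul (R := ℂ))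
      (r.left i) =
      ∑ k ∈ (v i).index, ∑ l ∈ (w i k).index,
        ((v i).left k ⊗ₜ[ℂ] (w i k).left l) ⊗ₜ[ℂ] (w i k).right l := by
    rw [LinearMap.comp_apply, LinearMap.comp_apply, ← (v i).eq, map_sum, map_sum]
    refine Finset.sum_congr rfl fun k _ => ?_
    rw [LinearMap.lTensor_tmul, ← (w i k).eq, TensorProduct.tmul_sum, map_sum]
    refine Finset.sum_congr rfl fun l _ => ?_
    simp
  rw [hinner, TensorProduct.sum_tmul, map_sum]
  refine Finset.sum_congr rfl fun k _ => ?_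
  rw [TensorProduct.sum_tmul, map_sum]
  refine Finset.sum_congr rfl fun l _ => ?_
  simp

end CMKey4
/-- Second antipode axiom for the Connes–Moscovici Hopf algebroid:
`Σ (a ⊗ q₍₁₎ ⊗ 1)·S(1 ⊗ q₍₂₎ ⊗ b) = (a ε(q) b) ⊗ 1 ⊗ 1`,
i.e. `μ_H (id ⊗ S) Δ_r = s_l ε_l`. -/
theorem cm_antipode_axiom_right
    {Q A : Type*} [Ring Q] [HopfAlgebra ℂ Q] [Ring A] [Algebra ℂ A]
    (act : Q →ₗ[ℂ] A →ₗ[ℂ] A)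
    (hact_one : ∀ a : A, act 1 a = a)
    (hact_mul : ∀ (q q' : Q) (a : A), act (q * q') a = act q (act q' a))
    (hact_alg_mul : ∀ (q : Q) (a a' : A),
      act q (a * a') =
        LinearMap.mul' ℂ A
          (TensorProduct.map (act.flip a) (act.flip a') (Coalgebra.comul (R := ℂ) q)))
    (hact_alg_one : ∀ q : Q, act q 1 = Coalgebra.counit (R := ℂ) q • (1 : A))
    (hT : ∀ q : Q, HopfAlgebra.antipode (R := ℂ) (HopfAlgebra.antipode (R := ℂ) q) = q)
    -- the Connes–Moscovici multiplication on `H`: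
    (m : (A ⊗[ℂ] (Q ⊗[ℂ] A)) →ₗ[ℂ] (A ⊗[ℂ] (Q ⊗[ℂ] A)) →ₗ[ℂ] (A ⊗[ℂ] (Q ⊗[ℂ] A)))
    (hm : ∀ (a : A) (q : Q) (b a' : A) (q' : Q) (b' : A),
      m (a ⊗ₜ[ℂ] (q ⊗ₜ[ℂ] b)) (a' ⊗ₜ[ℂ] (q' ⊗ₜ[ℂ] b')) = cmMulRHS act a q b a' q' b')
    -- the antipode of `H`:
    (S : (A ⊗[ℂ] (Q ⊗[ℂ] A)) →ₗ[ℂ] (A ⊗[ℂ] (Q ⊗[ℂ] A)))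
    (hS : ∀ (a : A) (q : Q) (b : A),
      S (a ⊗ₜ[ℂ] (q ⊗ₜ[ℂ] b)) = cmAntipodeRHS act a q b) :
    ∀ (a : A) (q : Q) (b : A),
      TensorProduct.lift ((m.comp (cmLegL a)).compl₂ (S.comp (cmLegR b)))
          (Coalgebra.comul (R := ℂ) q) =
        (Coalgebra.counit (R := ℂ) q • (a * b)) ⊗ₜ[ℂ] ((1 : Q) ⊗ₜ[ℂ] (1 : A)) := by
  classical
  intro a q b
  set r := Coalgebra.Repr.arbitrary ℂ q with hr
  set v := fun i : r.ι => Coalgebra.Repr.arbitrary ℂ (r.left i) with hv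
  set w := fun (i : r.ι) (k : (v i).ι) =>
    Coalgebra.Repr.arbitrary ℂ ((v i).right k) with hw
  -- expand the left-hand side over a representation of `comul q`
  conv_lhs => rw [← r.eq, map_sum]
  have step1 : ∀ i ∈ r.index,
      TensorProduct.lift ((m.comp (cmLegL a)).compl₂ (S.comp (cmLegR b)))
          (r.left i ⊗ₜ[ℂ] r.right i)
        = Lam act a b (Coalgebra.comul (R := ℂ) (r.left i) ⊗ₜ[ℂ]
            Coalgebra.comul (R := ℂ) (r.right i)) := by
    intro i _
    rw [TensorProduct.lift.tmul, LinearMap.compl₂_apply, LinearMap.comp_apply,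
      LinearMap.comp_apply]
    simp only [cmLegL, cmLegR, LinearMap.comp_apply, LinearMap.flip_apply,
      TensorProduct.mk_apply]
    rw [lemB act b hact_alg_one S hS]
    set u := Coalgebra.Repr.arbitrary ℂ (r.right i) with hu
    rw [← u.eq]
    conv_lhs => rw [map_sum, map_sum]
    conv_rhs => rw [TensorProduct.tmul_sum, map_sum]
    refine Finset.sum_congr rfl fun j _ => ?_
    rw [Gmap_tmul, lemC act a hact_alg_one m hm, Lam_eq_Hmap]
  rw [Finset.sum_congr rfl step1]
  have step2 : ∑ i ∈ r.index,
      Lam act a b (Coalgebra.comul (R := ℂ) (r.left i) ⊗ₜ[ℂ]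
        Coalgebra.comul (R := ℂ) (r.right i))
      = Lam act a b (TensorProduct.map (Coalgebra.comul (R := ℂ))
          (Coalgebra.comul (R := ℂ)) (Coalgebra.comul (R := ℂ) q)) := by
    rw [← r.eq, map_sum, map_sum]
    simp
  rw [step2, keyD q r v w, map_sum]
  have step3 : ∀ i ∈ r.index,
      Lam act a b (∑ k ∈ (v i).index, ∑ l ∈ (w i k).index,
          ((v i).left k ⊗ₜ[ℂ] (w i k).left l) ⊗ₜ[ℂ]
            ((w i k).right l ⊗ₜ[ℂ] r.right i))
        = (a * act (r.left i)
            (act (HopfAlgebra.antipode (R := ℂ) (r.right i)) b)) ⊗ₜ[ℂ]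
          ((1 : Q) ⊗ₜ[ℂ] (1 : A)) := by
    intro i _
    rw [map_sum]
    have inner : ∀ k ∈ (v i).index,
        Lam act a b (∑ l ∈ (w i k).index,
            ((v i).left k ⊗ₜ[ℂ] (w i k).left l) ⊗ₜ[ℂ]
              ((w i k).right l ⊗ₜ[ℂ] r.right i))
          = (Coalgebra.counit (R := ℂ) ((v i).right k)) •
            ((a * act ((v i).left k)
              (act (HopfAlgebra.antipode (R := ℂ) (r.right i)) b)) ⊗ₜ[ℂ]
              ((1 : Q) ⊗ₜ[ℂ] (1 : A))) := by
      intro k _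
      rw [map_sum]
      simp only [Lam_tmul]
      rw [← TensorProduct.tmul_sum, ← TensorProduct.sum_tmul,
        HopfAlgebra.sum_mul_antipode_eq_smul (w i k)]
      rw [TensorProduct.smul_tmul, TensorProduct.tmul_smul, TensorProduct.tmul_smul,
        TensorProduct.smul_tmul']
    rw [Finset.sum_congr rfl inner]
    have := congrArg
      (((TensorProduct.mk ℂ A (Q ⊗[ℂ] A)).flip ((1 : Q) ⊗ₜ[ℂ] (1 : A))) ∘ₗ
        LinearMap.mulLeft ℂ a ∘ₗ
        act.flip (act (HopfAlgebra.antipode (R := ℂ) (r.right i)) b))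
      (counit_smul_right (v i))
    rw [map_sum] at this
    simp only [LinearMap.comp_apply, map_smul, TensorProduct.mk_apply,
      LinearMap.flip_apply, LinearMap.mulLeft_apply] at this
    exact this
  rw [Finset.sum_congr rfl step3]
  have final := congrArg
    (((TensorProduct.mk ℂ A (Q ⊗[ℂ] A)).flip ((1 : Q) ⊗ₜ[ℂ] (1 : A))) ∘ₗ
      LinearMap.mulLeft ℂ a ∘ₗ act.flip b)
    (HopfAlgebra.sum_mul_antipode_eq_smul r)
  rw [map_sum] at final
  simp only [LinearMap.comp_apply, map_smul, TensorProduct.mk_apply,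
    LinearMap.flip_apply, LinearMap.mulLeft_apply] at final
  calc ∑ i ∈ r.index,
      (a * act (r.left i)
        (act (HopfAlgebra.antipode (R := ℂ) (r.right i)) b)) ⊗ₜ[ℂ]
        ((1 : Q) ⊗ₜ[ℂ] (1 : A))
      = ∑ i ∈ r.index,
        (a * act (r.left i * HopfAlgebra.antipode (R := ℂ) (r.right i)) b) ⊗ₜ[ℂ]
          ((1 : Q) ⊗ₜ[ℂ] (1 : A)) := by
        refine Finset.sum_congr rfl fun i _ => ?_
        rw [hact_mul]
    _ = Coalgebra.counit (R := ℂ) q •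
          ((a * act (1 : Q) b) ⊗ₜ[ℂ] ((1 : Q) ⊗ₜ[ℂ] (1 : A))) := by
        exact final
    _ = (Coalgebra.counit (R := ℂ) q • (a * b)) ⊗ₜ[ℂ] ((1 : Q) ⊗ₜ[ℂ] (1 : A)) := by
        rw [hact_one, TensorProduct.smul_tmul']
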